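/- Let λ > 0 with θ_λ ∈ (0, π/2) defined by tan θ_λ = 1/λ, let γ_λ ∈ (0, θ_λ), and let μ_L : [γ_λ, θ_λ] → [0, ∞) be continuous on [γ_λ, θ_λ] and differentiable on (γ_λ, θ_λ), non-negative, non-decreasing, with μ_L(θ_λ) ≤ μ_G(γ_λ). Assume the contraction conditions sin θ_λ · (sup_{(γ_λ,θ_λ)} μ_L') · h(γ_λ) < 1 and sin θ_λ · (sup_{[γ_λ,θ_λ]} μ_L) · |h'(γ_λ)| < 1. Then for every φ⁰ ∈ [γ_λ, θ_λ], the sequence φ^{k+1} = f̃(φ^k) converges to the unique φ ∈ [γ_λ, θ_λ] satisfying μ_L(φ) = μ_G(φ). -/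

import Mathlib

open Real Set

/-- The function `h(x) = (λ cot x + 1)/sin x`. -/
noncomputable def hBEM (lam x : ℝ) : ℝ :=
  (lam * (Real.cos x / Real.sin x) + 1) / Real.sin x

/-- The fixed-point map of the usual BEM algorithm for the simplified model:
`f̃(x) = π/2 − arctan(λ + μ_L(x) h(x))`. -/
noncomputable def fBEM (lam : ℝ) (μL : ℝ → ℝ) (x : ℝ) : ℝ :=
  Real.pi / 2 - Real.arctan (lam + μL x * hBEM lam x)

/-- minus the derivative of `hBEM`. -/
noncomputable def gBEM (lam x : ℝ) : ℝ :=
  (lam * (1 + Real.cos x ^ 2) + Real.sin x * Real.cos x) / Real.sin x ^ 3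

lemma hBEM_hasDerivAt (lam : ℝ) {x : ℝ} (hx : Real.sin x ≠ 0) :
    HasDerivAt (hBEM lam) (-(gBEM lam x)) x := by
  have hc := Real.hasDerivAt_cos x
  have hs := Real.hasDerivAt_sin x
  have h1 : HasDerivAt (fun y => lam * (Real.cos y / Real.sin y) + 1)
      (lam * ((-Real.sin x * Real.sin x - Real.cos x * Real.cos x) / Real.sin x ^ 2)) x := by
    simpa using ((hc.div hs hx).const_mul lam).add_const 1
  have h2 := h1.div hs hx
  have h3 : HasDerivAt (hBEM lam)
      ((lam * ((-Real.sin x * Real.sin x - Real.cos x * Real.cos x) / Real.sin x ^ 2) * Real.sin x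
        - (lam * (Real.cos x / Real.sin x) + 1) * Real.cos x) / Real.sin x ^ 2) x := h2
  convert h3 using 1
  have hp : Real.sin x ^ 2 + Real.cos x ^ 2 = 1 := Real.sin_sq_add_cos_sq x
  unfold gBEM
  field_simp
  linear_combination lam * hp

lemma gBEM_hasDerivAt (lam : ℝ) {x : ℝ} (hx : Real.sin x ≠ 0) :
    HasDerivAt (gBEM lam)
      (((lam * (2 * Real.cos x * -Real.sin x) + (Real.cos x * Real.cos x - Real.sin x * Real.sin x))
          * Real.sin x ^ 3
        - (lam * (1 + Real.cos x ^ 2) + Real.sin x * Real.cos x) * (3 * Real.sin x ^ 2 * Real.cos x))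
        / (Real.sin x ^ 3) ^ 2) x := by
  have hc := Real.hasDerivAt_cos x
  have hs := Real.hasDerivAt_sin x
  have hnum : HasDerivAt (fun y => lam * (1 + Real.cos y ^ 2) + Real.sin y * Real.cos y)
      (lam * (2 * Real.cos x * -Real.sin x)
        + (Real.cos x * Real.cos x - Real.sin x * Real.sin x)) x := by
    have h1 : HasDerivAt (fun y => lam * (1 + Real.cos y ^ 2))
        (lam * (2 * Real.cos x * -Real.sin x)) x := by
      have := ((hc.pow 2).const_add 1).const_mul lam
      simpa [mul_comm, mul_assoc, mul_left_comm] using this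
    have h2 : HasDerivAt (fun y => Real.sin y * Real.cos y)
        (Real.cos x * Real.cos x - Real.sin x * Real.sin x) x := by
      rw [show Real.cos x * Real.cos x - Real.sin x * Real.sin x = Real.cos x * Real.cos x + Real.sin x * -Real.sin x by ring]; exact hs.mul hc
    exact h1.add h2
  have hden : HasDerivAt (fun y => Real.sin y ^ 3) (3 * Real.sin x ^ 2 * Real.cos x) x := by
    rw [show 3 * Real.sin x ^ 2 * Real.cos x = ((3:ℕ):ℝ) * Real.sin x ^ (3 - 1) * Real.cos x by norm_num]; exact hs.pow 3
  have := hnum.div hden (by positivity)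
  exact this

/-- derivative of a function monotone on `Icc a b` is nonneg inside. -/
lemma deriv_nonneg_of_monotoneOn {f : ℝ → ℝ} {f' a b x : ℝ} (hx : x ∈ Ioo a b)
    (hm : MonotoneOn f (Icc a b)) (hd : HasDerivAt f f' x) : 0 ≤ f' := by
  have h1 : Filter.Tendsto (slope f x) (nhdsWithin x (Ioi x)) (nhds f') := by
    have h2 := (hd.hasDerivWithinAt (s := Ioi x))
    rw [hasDerivWithinAt_iff_tendsto_slope] at h2
    have : Ioi x \ {x} = Ioi x := diff_singleton_eq_self (by simp)
    rwa [this] at h2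
  refine ge_of_tendsto h1 ?_
  filter_upwards [Ioo_mem_nhdsGT_of_mem ⟨le_refl x, hx.2⟩] with y hy
  rw [slope_def_field]
  apply div_nonneg
  · exact sub_nonneg.2 <| hm ⟨hx.1.le, hx.2.le⟩ ⟨(hx.1.trans hy.1).le, hy.2.le⟩ hy.1.le
  · linarith [hy.1]

set_option maxHeartbeats 1600000 in
/-- Conditional convergence of the usual BEM fixed-point iteration: under
the stability condition `μ_L(θ_λ) ≤ μ_G(γ_λ)` and the contraction conditions
`sin θ_λ · (sup μ_L') · h(γ_λ) < 1` and `sin θ_λ · (sup μ_L) · |h'(γ_λ)| < 1`, the iteration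
`φ^{k+1} = f̃(φ^k)` converges, from any `φ⁰ ∈ [γ_λ, θ_λ]`, to the unique solution of
`μ_L(φ) = μ_G(φ)` in `[γ_λ, θ_λ]`. -/
theorem bem_usual_iteration_convergence
    (lam θ γ : ℝ) (hlam : 0 < lam) (hθ : θ ∈ Ioo 0 (π / 2))
    (htan : Real.tan θ = 1 / lam) (hγ : γ ∈ Ioo 0 θ)
    (μL μL' : ℝ → ℝ)
    (hμLc : ContinuousOn μL (Icc γ θ))
    (hμLd : ∀ x ∈ Ioo γ θ, HasDerivAt μL (μL' x) x)
    (hμLnn : ∀ x ∈ Icc γ θ, 0 ≤ μL x)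
    (hμLmono : MonotoneOn μL (Icc γ θ))
    (hstab : μL θ ≤ Real.sin γ * Real.tan (θ - γ))
    (M₁ M₀ : ℝ)
    (hM₁ : IsLUB (μL' '' Ioo γ θ) M₁)
    (hM₀ : IsLUB (μL '' Icc γ θ) M₀)
    (hcontract1 : Real.sin θ * M₁ * hBEM lam γ < 1)
    (hcontract2 : Real.sin θ * M₀ * |deriv (hBEM lam) γ| < 1) :
    ∃ φs ∈ Icc γ θ,
      μL φs = Real.sin φs * Real.tan (θ - φs) ∧
      (∀ x ∈ Icc γ θ, μL x = Real.sin x * Real.tan (θ - x) → x = φs) ∧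
      ∀ seq : ℕ → ℝ, seq 0 ∈ Icc γ θ →
        (∀ k : ℕ, seq (k + 1) = fBEM lam μL (seq k)) →
        Filter.Tendsto seq Filter.atTop (nhds φs) := by
  obtain ⟨hθ0, hθ2⟩ := hθ
  obtain ⟨hγ0, hγθ⟩ := hγ
  have hπ := Real.pi_pos
  -- basic trig positivity on [γ, θ]
  have hsc : ∀ x ∈ Icc γ θ, 0 < Real.sin x ∧ 0 < Real.cos x := by
    intro x hx
    constructor
    · exact Real.sin_pos_of_pos_of_lt_pi (by linarith [hx.1]) (by linarith [hx.2])
    · exact Real.cos_pos_of_mem_Ioo ⟨by linarith [hx.1], by linarith [hx.2]⟩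
  have hsθ : 0 < Real.sin θ := (hsc θ (right_mem_Icc.2 (by linarith))).1
  have hcθ : 0 < Real.cos θ := (hsc θ (right_mem_Icc.2 (by linarith))).2
  have hlamS : lam * Real.sin θ = Real.cos θ := by
    rw [Real.tan_eq_sin_div_cos] at htan
    field_simp at htan
    linarith [htan]
  have hsθ1 : Real.sin θ < 1 := by
    nlinarith [Real.sin_sq_add_cos_sq θ]
  -- positivity of hBEM
  have hhpos : ∀ x ∈ Icc γ θ, 0 < hBEM lam x := by
    intro x hx
    obtain ⟨hs, hc⟩ := hsc x hx
    unfold hBEM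
    positivity
  -- nonnegativity of gBEM
  have hgpos : ∀ x ∈ Icc γ θ, 0 ≤ gBEM lam x := by
    intro x hx
    obtain ⟨hs, hc⟩ := hsc x hx
    unfold gBEM
    positivity
  -- key identity
  have keyId : ∀ x ∈ Icc γ θ, Real.sin x * Real.tan (θ - x) * hBEM lam x
      = Real.cos x / Real.sin x - lam := by
    intro x hx
    obtain ⟨hs, hc⟩ := hsc x hx
    have hcsub : 0 < Real.cos (θ - x) :=
      Real.cos_pos_of_mem_Ioo ⟨by linarith [hx.1, hx.2], by linarith [hx.1, hx.2]⟩
    rw [Real.tan_eq_sin_div_cos, Real.sin_sub, Real.cos_sub]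
    unfold hBEM
    have h1 : Real.cos θ * Real.cos x + Real.sin θ * Real.sin x ≠ 0 := by
      rw [← Real.cos_sub]; exact hcsub.ne'
    field_simp
    linear_combination (Real.cos x^2 + Real.sin x^2) * hlamS
  -- antitonicity of hBEM on [γ, θ]
  have hcont_h : ContinuousOn (hBEM lam) (Icc γ θ) := by
    apply ContinuousOn.div
    · exact (continuousOn_const.mul (Real.continuous_cos.continuousOn.div
        Real.continuous_sin.continuousOn fun x hx => (hsc x hx).1.ne')).add continuousOn_const
    · exact Real.continuous_sin.continuousOn
    · exact fun x hx => (hsc x hx).1.ne'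
  have hanti_h : AntitoneOn (hBEM lam) (Icc γ θ) := by
    apply antitoneOn_of_deriv_nonpos (convex_Icc γ θ) hcont_h
    · intro x hx
      rw [interior_Icc] at hx
      exact ((hBEM_hasDerivAt lam (hsc x (Ioo_subset_Icc_self hx)).1.ne').differentiableAt).differentiableWithinAt
    · intro x hx
      rw [interior_Icc] at hx
      rw [(hBEM_hasDerivAt lam (hsc x (Ioo_subset_Icc_self hx)).1.ne').deriv]
      simpa using hgpos x (Ioo_subset_Icc_self hx)
  -- antitonicity of gBEM on [γ, θ]
  have hcont_g : ContinuousOn (gBEM lam) (Icc γ θ) := by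
    apply ContinuousOn.div
    · exact (continuousOn_const.mul (continuousOn_const.add
        ((Real.continuous_cos.continuousOn).pow 2))).add
        (Real.continuous_sin.continuousOn.mul Real.continuous_cos.continuousOn)
    · exact (Real.continuous_sin.continuousOn).pow 3
    · exact fun x hx => pow_ne_zero 3 (hsc x hx).1.ne'
  have hanti_g : AntitoneOn (gBEM lam) (Icc γ θ) := by
    apply antitoneOn_of_deriv_nonpos (convex_Icc γ θ) hcont_g
    · intro x hx
      rw [interior_Icc] at hx
      exact ((gBEM_hasDerivAt lam (hsc x (Ioo_subset_Icc_self hx)).1.ne').differentiableAt).differentiableWithinAt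
    · intro x hx
      rw [interior_Icc] at hx
      obtain ⟨hs, hc⟩ := hsc x (Ioo_subset_Icc_self hx)
      rw [(gBEM_hasDerivAt lam hs.ne').deriv]
      apply div_nonpos_of_nonpos_of_nonneg
      · nlinarith [mul_nonneg hlam.le (mul_nonneg (pow_nonneg hs.le 4) hc.le),
          mul_nonneg (pow_nonneg hs.le 3) (sq_nonneg (Real.cos x)),
          pow_nonneg hs.le 5,
          mul_nonneg hlam.le (mul_nonneg (pow_nonneg hs.le 2) hc.le),
          mul_nonneg hlam.le (mul_nonneg (mul_nonneg (pow_nonneg hs.le 2) hc.le)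
            (sq_nonneg (Real.cos x)))]
      · positivity
  -- the fixed point equation is equivalent to μL = μG
  have hγI : γ ∈ Icc γ θ := left_mem_Icc.2 (le_of_lt hγθ)
  have hfixIff : ∀ x ∈ Icc γ θ, (fBEM lam μL x = x ↔ μL x = Real.sin x * Real.tan (θ - x)) := by
    intro x hx
    obtain ⟨hs, hc⟩ := hsc x hx
    have hx2 : -(π/2) < π/2 - x := by linarith [hx.1, hx.2]
    have hx3 : π/2 - x < π/2 := by linarith [hx.1]
    have h1 : fBEM lam μL x = x ↔ lam + μL x * hBEM lam x = Real.cos x / Real.sin x := by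
      unfold fBEM
      constructor
      · intro h
        have h2 : Real.arctan (lam + μL x * hBEM lam x) = π/2 - x := by linarith
        have h3 := congrArg Real.tan h2
        rw [Real.tan_arctan, Real.tan_pi_div_two_sub, Real.tan_eq_sin_div_cos,
          inv_div] at h3
        exact h3
      · intro h
        have h6 : Real.tan (π/2 - x) = Real.cos x / Real.sin x := by
          rw [Real.tan_pi_div_two_sub, Real.tan_eq_sin_div_cos, inv_div]
        rw [h, ← h6, Real.arctan_tan hx2 hx3]
        ring
    rw [h1]
    have hk := keyId x hx
    constructor
    · intro h
      have : μL x * hBEM lam x = Real.sin x * Real.tan (θ - x) * hBEM lam x := by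
        rw [hk]; linarith
      exact mul_right_cancel₀ (hhpos x hx).ne' this
    · intro h
      rw [h, hk]; ring
  -- fBEM maps [γ, θ] to itself
  have harclam : Real.arctan lam = π/2 - θ := by
    have h1 : Real.tan (π/2 - θ) = lam := by
      rw [Real.tan_pi_div_two_sub, htan]
      simp
    rw [← h1, Real.arctan_tan (by linarith) (by linarith)]
  have hmaps : MapsTo (fBEM lam μL) (Icc γ θ) (Icc γ θ) := by
    intro x hx
    obtain ⟨hs, hc⟩ := hsc x hx
    have hμh : 0 ≤ μL x * hBEM lam x := mul_nonneg (hμLnn x hx) (hhpos x hx).le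
    constructor
    · -- γ ≤ fBEM x
      have h1 : μL x * hBEM lam x ≤ Real.cos γ / Real.sin γ - lam := by
        rw [← keyId γ hγI]
        have h2 : μL x ≤ Real.sin γ * Real.tan (θ - γ) :=
          (hμLmono hx (right_mem_Icc.2 hγθ.le) hx.2).trans hstab
        have h3 : hBEM lam x ≤ hBEM lam γ := hanti_h hγI hx hx.1
        have h4 : 0 ≤ Real.sin γ * Real.tan (θ - γ) :=
          mul_nonneg (hsc γ hγI).1.le
            (Real.tan_nonneg_of_nonneg_of_le_pi_div_two (by linarith) (by linarith))
        exact mul_le_mul h2 h3 (hhpos x hx).le h4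
      have h5 : Real.arctan (lam + μL x * hBEM lam x) ≤ π/2 - γ := by
        have h6 : Real.tan (π/2 - γ) = Real.cos γ / Real.sin γ := by
          rw [Real.tan_pi_div_two_sub, Real.tan_eq_sin_div_cos, inv_div]
        calc Real.arctan (lam + μL x * hBEM lam x)
            ≤ Real.arctan (Real.cos γ / Real.sin γ) :=
              Real.arctan_strictMono.monotone (by linarith)
          _ = π/2 - γ := by rw [← h6, Real.arctan_tan (by linarith) (by linarith)]
      unfold fBEM
      linarith
    · -- fBEM x ≤ θ
      have h1 : π/2 - θ ≤ Real.arctan (lam + μL x * hBEM lam x) := by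
        rw [← harclam]
        exact Real.arctan_strictMono.monotone (by linarith)
      unfold fBEM
      linarith
  -- contraction constant
  set m : ℝ := max (M₁ * hBEM lam γ) (M₀ * gBEM lam γ) with hm
  set q : ℝ := Real.sin θ ^ 2 * m with hq
  have hgγ : 0 ≤ gBEM lam γ := hgpos γ hγI
  have hM₀nn : 0 ≤ M₀ := le_trans (hμLnn γ hγI) (hM₀.1 ⟨γ, hγI, rfl⟩)
  have hmnn : 0 ≤ m := le_max_of_le_right (mul_nonneg hM₀nn hgγ)
  have hqnn : 0 ≤ q := mul_nonneg (sq_nonneg _) hmnn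
  have habs : |deriv (hBEM lam) γ| = gBEM lam γ := by
    rw [(hBEM_hasDerivAt lam (hsc γ hγI).1.ne').deriv, abs_neg, abs_of_nonneg hgγ]
  rw [habs] at hcontract2
  have hq1 : q < 1 := by
    have h1 : Real.sin θ * m < 1 := by
      rcases max_cases (M₁ * hBEM lam γ) (M₀ * gBEM lam γ) with ⟨h, _⟩ | ⟨h, _⟩ <;>
        rw [hm, h] <;> nlinarith [hcontract1, hcontract2]
    nlinarith [mul_nonneg hsθ.le hmnn]
  -- derivative of fBEM
  have hIooIcc : Ioo γ θ ⊆ Icc γ θ := Ioo_subset_Icc_self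
  set D : ℝ → ℝ := fun x => -(1 / (1 + (lam + μL x * hBEM lam x) ^ 2) *
      (μL' x * hBEM lam x + μL x * -(gBEM lam x))) with hD
  have hF' : ∀ x ∈ Ioo γ θ, HasDerivAt (fBEM lam μL) (D x) x := by
    intro x hx
    have hs := (hsc x (hIooIcc hx)).1
    have hu : HasDerivAt (fun y => lam + μL y * hBEM lam y)
        (μL' x * hBEM lam x + μL x * -(gBEM lam x)) x :=
      ((hμLd x hx).mul (hBEM_hasDerivAt lam hs.ne')).const_add lam
    have ha := (Real.hasDerivAt_arctan (lam + μL x * hBEM lam x)).comp x hu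
    exact ha.const_sub (π/2)
  have hDbd : ∀ x ∈ Ioo γ θ, |D x| ≤ q := by
    intro x hx
    have hxI := hIooIcc hx
    set A : ℝ := μL' x * hBEM lam x with hA
    set B : ℝ := μL x * gBEM lam x with hB
    have hμ'nn : 0 ≤ μL' x := deriv_nonneg_of_monotoneOn hx hμLmono (hμLd x hx)
    have hA0 : 0 ≤ A := mul_nonneg hμ'nn (hhpos x hxI).le
    have hB0 : 0 ≤ B := mul_nonneg (hμLnn x hxI) (hgpos x hxI)
    have hM₁nn : 0 ≤ M₁ := le_trans hμ'nn (hM₁.1 ⟨x, hx, rfl⟩)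
    have hAle : A ≤ M₁ * hBEM lam γ :=
      mul_le_mul (hM₁.1 ⟨x, hx, rfl⟩) (hanti_h hγI hxI hxI.1) (hhpos x hxI).le hM₁nn
    have hBle : B ≤ M₀ * gBEM lam γ :=
      mul_le_mul (hM₀.1 ⟨x, hxI, rfl⟩) (hanti_g hγI hxI hxI.1) (hgpos x hxI) hM₀nn
    have habs2 : |A - B| ≤ m := by
      rw [abs_le]
      constructor
      · have := le_max_right (M₁ * hBEM lam γ) (M₀ * gBEM lam γ)
        rw [← hm] at this
        linarith
      · have := le_max_left (M₁ * hBEM lam γ) (M₀ * gBEM lam γ)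
        rw [← hm] at this
        linarith
    set t : ℝ := lam + μL x * hBEM lam x with ht
    have htlam : lam ≤ t := by
      have : 0 ≤ μL x * hBEM lam x := mul_nonneg (hμLnn x hxI) (hhpos x hxI).le
      rw [ht]; linarith
    have hdpos : (0:ℝ) < 1 + t ^ 2 := by positivity
    have hdle : 1 / (1 + t ^ 2) ≤ Real.sin θ ^ 2 := by
      rw [div_le_iff₀ hdpos]
      have h2 : lam ^ 2 ≤ t ^ 2 := by nlinarith
      have h3 : Real.sin θ ^ 2 * lam ^ 2 ≤ Real.sin θ ^ 2 * t ^ 2 :=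
        mul_le_mul_of_nonneg_left h2 (sq_nonneg _)
      nlinarith [Real.sin_sq_add_cos_sq θ]
    have hDx : D x = -(1 / (1 + t ^ 2) * (A - B)) := by
      rw [hD]; simp only [ht, hA, hB]; ring
    rw [hDx, abs_neg, abs_mul, abs_of_pos (by positivity : (0:ℝ) < 1 / (1 + t ^ 2))]
    calc 1 / (1 + t ^ 2) * |A - B| ≤ Real.sin θ ^ 2 * m :=
          mul_le_mul hdle habs2 (abs_nonneg _) (sq_nonneg _)
      _ = q := hq.symm
  -- fBEM is Lipschitz on [γ, θ] with constant q
  have hFcont : ContinuousOn (fBEM lam μL) (Icc γ θ) := by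
    unfold fBEM
    exact continuousOn_const.sub (Real.continuous_arctan.comp_continuousOn
      (continuousOn_const.add (hμLc.mul hcont_h)))
  have hFdiff : DifferentiableOn ℝ (fBEM lam μL) (interior (Icc γ θ)) := by
    rw [interior_Icc]
    exact fun x hx => ((hF' x hx).differentiableAt).differentiableWithinAt
  have hderivle : ∀ x ∈ interior (Icc γ θ), deriv (fBEM lam μL) x ≤ q := by
    intro x hx
    rw [interior_Icc] at hx
    rw [(hF' x hx).deriv]
    exact (abs_le.1 (hDbd x hx)).2
  have hderivge : ∀ x ∈ interior (Icc γ θ), -q ≤ deriv (fBEM lam μL) x := by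
    intro x hx
    rw [interior_Icc] at hx
    rw [(hF' x hx).deriv]
    exact (abs_le.1 (hDbd x hx)).1
  have hub := (convex_Icc γ θ).image_sub_le_mul_sub_of_deriv_le hFcont hFdiff hderivle
  have hlb := (convex_Icc γ θ).mul_sub_le_image_sub_of_le_deriv hFcont hFdiff hderivge
  have hlip : LipschitzOnWith q.toNNReal (fBEM lam μL) (Icc γ θ) := by
    apply LipschitzOnWith.of_dist_le_mul
    intro x hx y hy
    rw [Real.dist_eq, Real.dist_eq, Real.coe_toNNReal q hqnn]
    rcases le_total x y with h | h
    · have h1 := hub x hx y hy h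
      have h2 := hlb x hx y hy h
      have h3 : |x - y| = y - x := by rw [abs_sub_comm]; exact abs_of_nonneg (by linarith)
      rw [abs_sub_comm, h3, abs_le]
      exact ⟨by linarith, by linarith⟩
    · have h1 := hub y hy x hx h
      have h2 := hlb y hy x hx h
      have h3 : |x - y| = x - y := abs_of_nonneg (by linarith)
      rw [h3, abs_le]
      exact ⟨by linarith, by linarith⟩
  -- Banach fixed point on the complete subtype
  haveI : Nonempty (Icc γ θ) := ⟨⟨γ, hγI⟩⟩
  haveI : CompleteSpace (Icc γ θ) := (isClosed_Icc).completeSpace_coe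
  set F : Icc γ θ → Icc γ θ := hmaps.restrict _ _ _ with hFdef
  have hlipF : LipschitzWith q.toNNReal F := LipschitzOnWith.to_restrict hlip
  have hcontr : ContractingWith q.toNNReal F := by
    refine ⟨?_, hlipF⟩
    rw [← NNReal.coe_lt_coe, NNReal.coe_one, Real.coe_toNNReal q hqnn]
    exact hq1
  set p := ContractingWith.fixedPoint F hcontr with hpdef
  have hfixp : fBEM lam μL (p : ℝ) = (p : ℝ) := by
    have h1 : F p = p := hcontr.fixedPoint_isFixedPt
    have h2 := congrArg Subtype.val h1
    rwa [MapsTo.val_restrict_apply] at h2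
  refine ⟨(p : ℝ), p.2, (hfixIff (p : ℝ) p.2).1 hfixp, ?_, ?_⟩
  · intro x hx heq
    have h1 : fBEM lam μL x = x := (hfixIff x hx).2 heq
    have h2 : Function.IsFixedPt F ⟨x, hx⟩ := by
      apply Subtype.ext
      rwa [MapsTo.val_restrict_apply]
    have h3 := hcontr.fixedPoint_unique h2
    exact congrArg Subtype.val h3
  · intro seq h0 hrec
    have hmem : ∀ k, seq k ∈ Icc γ θ := by
      intro k
      induction k with
      | zero => exact h0
      | succ n ih => rw [hrec n]; exact hmaps ih
    have hiter : ∀ k, ((F^[k] ⟨seq 0, h0⟩ : Icc γ θ) : ℝ) = seq k := by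
      intro k
      induction k with
      | zero => rfl
      | succ n ih =>
        rw [Function.iterate_succ_apply', hrec n, ← ih]
        exact MapsTo.val_restrict_apply hmaps _
    have htend := hcontr.tendsto_iterate_fixedPoint ⟨seq 0, h0⟩
    have h4 := (continuous_subtype_val.tendsto p).comp htend
    have h5 : (Subtype.val ∘ fun n => F^[n] ⟨seq 0, h0⟩) = seq := by
      funext n
      exact hiter n
    rwa [h5] at h4
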